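/- For every integer n ≥ 3 and every integer k with 1 ≤ k ≤ n/2, the k-th power of the cycle C_n^k (vertices v_1,...,v_n, with v_i adjacent to v_j iff the cyclic distance between i and j is at most k) has at least 2^{n − ⌈n/k⌉} connected sets. Consequently c(C_n^k) ≥ (1/2)·2^{(n−⌈n/k⌉)/n}. -/

import Mathlib

/-- The number of connected sets `N(G)`: nonempty vertex subsets inducing a connected
subgraph. -/
noncomputable def numConnSets {V : Type*} [Fintype V] (G : SimpleGraph V) : ℕ :=
  Nat.card {S : Finset V // S.Nonempty ∧ (G.induce (S : Set V)).Connected}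

/-- The `k`-th power `C_n^k` of the cycle on `n` vertices: `v_i` is adjacent to `v_j`
iff `i ≠ j` and the cyclic distance between `i` and `j` is at most `k` (equivalently,
one of the two directed cyclic distances is at most `k`). -/
def cyclePower (n k : ℕ) : SimpleGraph (Fin n) :=
  SimpleGraph.fromRel (fun i j => (j.val + n - i.val) % n ≤ k)

lemma cyclePower_adj {n k : ℕ} {i j : Fin n} (hne : i ≠ j)
    (h : (j.val + n - i.val) % n ≤ k) : (cyclePower n k).Adj i j :=
  (SimpleGraph.fromRel_adj _ i j).mpr ⟨hne, Or.inl h⟩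

lemma connected_of_superset (n k : ℕ) (hn : 3 ≤ n) (hk1 : 1 ≤ k) (hk2 : 2 * k ≤ n)
    (S : Finset (Fin n)) (hD : ∀ i : Fin n, i.val % k = 0 → i ∈ S) :
    ((cyclePower n k).induce (S : Set (Fin n))).Connected := by
  have npos : 0 < n := by omega
  have hkn : k < n := by omega
  set GI := (cyclePower n k).induce (S : Set (Fin n)) with hGI
  have h0S : (⟨0, npos⟩ : Fin n) ∈ S := hD _ (by simp)
  set v0 : ↥(S : Set (Fin n)) := ⟨⟨0, npos⟩, h0S⟩ with hv0
  have hmult : ∀ a (ha : k * a < n), (⟨k * a, ha⟩ : Fin n) ∈ S := fun a ha =>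
    hD _ (by simp [Nat.mul_mod_right])
  have chain : ∀ a (ha : k * a < n), GI.Reachable v0 ⟨⟨k * a, ha⟩, hmult a ha⟩ := by
    intro a
    induction a with
    | zero =>
      intro ha
      have : (⟨⟨k * 0, ha⟩, hmult 0 ha⟩ : ↥(S : Set (Fin n))) = v0 := by
        apply Subtype.ext; apply Fin.ext; simp [hv0]
      rw [this]
    | succ a ih =>
      intro ha
      have ha' : k * a < n := by nlinarith
      refine (ih ha').trans (SimpleGraph.Adj.reachable ?_)
      show (cyclePower n k).Adj ⟨k * a, ha'⟩ ⟨k * (a+1), ha⟩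
      apply cyclePower_adj
      · intro h
        have := Fin.val_eq_of_eq h
        simp at this
        omega
      · have : k * (a + 1) + n - k * a = k + n := by ring_nf; omega
        rw [this, Nat.add_mod_right, Nat.mod_eq_of_lt hkn]
  have reach : ∀ (v : ↥(S : Set (Fin n))), GI.Reachable v0 v := by
    rintro ⟨v, hv⟩
    have hd : k * (v.val / k) < n := lt_of_le_of_lt (Nat.mul_div_le v.val k) v.isLt
    have hc := chain (v.val / k) hd
    have hmod := Nat.mod_add_div v.val k
    have hmlt : v.val % k < k := Nat.mod_lt _ (by omega)
    by_cases heq : v.val = k * (v.val / k)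
    · have : (⟨v, hv⟩ : ↥(S : Set (Fin n))) = ⟨⟨k * (v.val / k), hd⟩, hmult _ hd⟩ := by
        apply Subtype.ext; apply Fin.ext; simpa using heq
      rw [this]; exact hc
    · refine hc.trans (SimpleGraph.Adj.reachable ?_)
      show (cyclePower n k).Adj ⟨k * (v.val / k), hd⟩ v
      apply cyclePower_adj
      · intro h
        have := Fin.val_eq_of_eq h
        simp at this
        omega
      · have h1 : k * (v.val / k) ≤ v.val := Nat.mul_div_le v.val k
        have h2 : v.val + n - k * (v.val / k) = (v.val - k * (v.val / k)) + n := by omega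
        rw [h2, Nat.add_mod_right, Nat.mod_eq_of_lt (by omega)]
        omega
  rw [SimpleGraph.connected_iff]
  exact ⟨fun u v => (reach u).symm.trans (reach v), ⟨v0⟩⟩

/-- For `n ≥ 3` and `1 ≤ k ≤ n/2`, the graph `C_n^k` has at least `2^(n − ⌈n/k⌉)`
connected sets; consequently `c(C_n^k) ≥ (1/2)·2^((n−⌈n/k⌉)/n)`. -/
theorem cyclePower_numConnSets (n k : ℕ) (hn : 3 ≤ n) (hk1 : 1 ≤ k) (hk2 : 2 * k ≤ n) :
    2 ^ (n - ⌈(n : ℝ) / k⌉₊) ≤ numConnSets (cyclePower n k) ∧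
      (1 / 2 : ℝ) * (2 : ℝ) ^ (((n : ℝ) - ⌈(n : ℝ) / k⌉₊) / n) ≤
        (1 / 2 : ℝ) * (numConnSets (cyclePower n k) : ℝ) ^ ((1 : ℝ) / n) := by
  classical
  have npos : 0 < n := by omega
  have kpos : 0 < k := hk1
  set c : ℕ := ⌈(n : ℝ) / k⌉₊ with hc
  set D : Finset (Fin n) := Finset.univ.filter (fun i => i.val % k = 0) with hDdef
  -- |D| ≤ c
  have hDcard : D.card ≤ c := by
    have hq : (n - 1) / k + 1 ≤ c := by
      have : (((n - 1) / k : ℕ) : ℝ) < (n : ℝ) / k := by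
        rw [lt_div_iff₀ (by positivity)]
        have h1 : (n - 1) / k * k ≤ n - 1 := Nat.div_mul_le_self _ _
        push_cast
        have : ((n-1)/k : ℕ) * (k:ℝ) = (((n-1)/k * k : ℕ) : ℝ) := by push_cast; ring
        rw [this]
        exact_mod_cast by omega
      have := Nat.lt_ceil.mpr this
      omega
    refine le_trans ?_ hq
    have : D.card ≤ (Finset.range ((n-1)/k + 1)).card := by
      apply Finset.card_le_card_of_injOn (fun i => i.val / k)
      · intro i hi
        simp only [hDdef, Finset.mem_filter] at hi
        simp only [Finset.mem_range]
        have hle : i.val ≤ n - 1 := by omega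
        exact Finset.mem_coe.mpr (Finset.mem_range.mpr (Nat.lt_succ_of_le (Nat.div_le_div_right hle)))
      · intro i hi j hj hij
        have hi' : i.val % k = 0 := (Finset.mem_filter.mp hi).2
        have hj' : j.val % k = 0 := (Finset.mem_filter.mp hj).2
        have hij' : i.val / k = j.val / k := hij
        have h1 := Nat.mod_add_div i.val k
        have h2 := Nat.mod_add_div j.val k
        apply Fin.ext
        calc i.val = k * (i.val / k) := by omega
          _ = k * (j.val / k) := by rw [hij']
          _ = j.val := by omega
    simpa using this
  have h0D : (⟨0, npos⟩ : Fin n) ∈ D := by simp [hDdef]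
  -- the injection
  have hinj : Function.Injective
      (fun T : {T : Finset (Fin n) // T ∈ (Finset.univ \ D).powerset} =>
        (⟨T.1 ∪ D, ⟨⟨⟨0, npos⟩, Finset.mem_union_right _ h0D⟩,
          connected_of_superset n k hn hk1 hk2 _ (fun i hi =>
            Finset.mem_union_right _ (by simp [hDdef, hi]))⟩⟩ :
          {S : Finset (Fin n) // S.Nonempty ∧ ((cyclePower n k).induce (S : Set (Fin n))).Connected})) := by
    rintro ⟨T1, h1⟩ ⟨T2, h2⟩ h
    simp only [Subtype.mk.injEq] at h ⊢
    rw [Finset.mem_powerset] at h1 h2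
    have d1 : Disjoint T1 D := by
      rw [Finset.disjoint_left]; intro a ha; have := h1 ha; simp at this; exact this
    have d2 : Disjoint T2 D := by
      rw [Finset.disjoint_left]; intro a ha; have := h2 ha; simp at this; exact this
    rw [← Finset.union_sdiff_cancel_right d1, h, Finset.union_sdiff_cancel_right d2]
  have hcount : 2 ^ (n - D.card) ≤ numConnSets (cyclePower n k) := by
    have := Nat.card_le_card_of_injective _ hinj
    rw [Nat.card_eq_fintype_card, Fintype.card_coe, Finset.card_powerset,
      Finset.card_univ_diff, Fintype.card_fin] at this
    exact this
  have hmain : 2 ^ (n - c) ≤ numConnSets (cyclePower n k) :=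
    le_trans (Nat.pow_le_pow_right (by norm_num) (by omega)) hcount
  refine ⟨hmain, ?_⟩
  -- real part
  have hcn : c ≤ n := by
    rw [hc]
    apply Nat.ceil_le.mpr
    rw [div_le_iff₀ (by positivity)]
    have hk' : (1:ℝ) ≤ (k:ℝ) := by exact_mod_cast hk1
    nlinarith [Nat.cast_nonneg (α := ℝ) n]
  have hcast : (n : ℝ) - c = ((n - c : ℕ) : ℝ) := by
    rw [Nat.cast_sub hcn]
  rw [hcast]
  have h1 : ((2:ℝ) ^ (n - c : ℕ)) ≤ (numConnSets (cyclePower n k) : ℝ) := by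
    exact_mod_cast hmain
  have h2 : ((2:ℝ) ^ (n - c : ℕ)) ^ ((1:ℝ)/n) ≤ (numConnSets (cyclePower n k) : ℝ) ^ ((1:ℝ)/n) :=
    Real.rpow_le_rpow (by positivity) h1 (by positivity)
  have h3 : ((2:ℝ) ^ (n - c : ℕ)) ^ ((1:ℝ)/n) = (2:ℝ) ^ (((n - c : ℕ) : ℝ) / n) := by
    rw [← Real.rpow_natCast 2 (n - c), ← Real.rpow_mul (by norm_num)]
    ring_nf
  rw [h3] at h2
  linarith
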